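/- Let (X,d) be a uniquely geodesic metric space which is uniformly convex with a monotone modulus of convexity δ(r,ε). Let A and B be two nonempty subsets of X with A convex. Then the pair (A,B) has property UC. -/

import Mathlib

open Filter Metric

/-- The distance between two sets: `inf {d(x,y) : x ∈ A, y ∈ B}`. -/
noncomputable def setDist {X : Type*} [PseudoMetricSpace X] (A B : Set X) : ℝ :=
  sInf (Set.image2 dist A B)

/-- Property UC for a pair of subsets of a metric space. -/
def PropUC {X : Type*} [MetricSpace X] (A B : Set X) : Prop :=
  ∀ x x' y : ℕ → X, (∀ n, x n ∈ A) → (∀ n, x' n ∈ A) → (∀ n, y n ∈ B) →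
    Tendsto (fun n => dist (x n) (y n)) atTop (nhds (setDist A B)) →
    Tendsto (fun n => dist (x' n) (y n)) atTop (nhds (setDist A B)) →
    Tendsto (fun n => dist (x n) (x' n)) atTop (nhds 0)

/-- `c` is a geodesic joining `x` to `y`: an isometric map of `[0, d(x,y)]` into `X`
with `c 0 = x` and `c (d(x,y)) = y`. -/
def IsGeodesic {X : Type*} [MetricSpace X] (x y : X) (c : ℝ → X) : Prop :=
  c 0 = x ∧ c (dist x y) = y ∧
    ∀ s ∈ Set.Icc (0 : ℝ) (dist x y), ∀ t ∈ Set.Icc (0 : ℝ) (dist x y),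
      dist (c s) (c t) = |s - t|

/-- A uniquely geodesic space: every two points are joined by a geodesic, and any two
geodesics joining the same pair of points coincide on `[0, d(x,y)]`. -/
def UniquelyGeodesicSpace (X : Type*) [MetricSpace X] : Prop :=
  ∀ x y : X, (∃ c, IsGeodesic x y c) ∧
    ∀ c c', IsGeodesic x y c → IsGeodesic x y c' →
      ∀ t ∈ Set.Icc (0 : ℝ) (dist x y), c t = c' t

/-- The geodesic segment `[x,y]`: the union of the images of `[0,d(x,y)]` under all
geodesics joining `x` to `y`. -/
def geodesicSegment {X : Type*} [MetricSpace X] (x y : X) : Set X :=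
  {z | ∃ c, IsGeodesic x y c ∧ ∃ t ∈ Set.Icc (0 : ℝ) (dist x y), c t = z}

/-- `m` is a midpoint of `x` and `y`: it lies on the geodesic segment `[x,y]` and is
equidistant from `x` and `y`. -/
def IsMidpoint {X : Type*} [MetricSpace X] (x y m : X) : Prop :=
  m ∈ geodesicSegment x y ∧ dist x m = dist x y / 2 ∧ dist y m = dist x y / 2

/-- A subset of a geodesic space is convex if it contains the geodesic segment
joining any two of its points. -/
def GeodesicConvex {X : Type*} [MetricSpace X] (A : Set X) : Prop :=
  ∀ x ∈ A, ∀ y ∈ A, geodesicSegment x y ⊆ A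

/-- `X` is uniformly convex with modulus `δ : (0,∞) × (0,2] → (0,1]`. -/
def UniformlyConvexWith (X : Type*) [MetricSpace X] (δ : ℝ → ℝ → ℝ) : Prop :=
  (∀ r > (0 : ℝ), ∀ ε ∈ Set.Ioc (0 : ℝ) 2, δ r ε ∈ Set.Ioc (0 : ℝ) 1) ∧
  ∀ a x y m : X, ∀ r > (0 : ℝ), ∀ ε ∈ Set.Ioc (0 : ℝ) 2,
    dist x a ≤ r → dist y a ≤ r → ε * r ≤ dist x y → IsMidpoint x y m →
      dist m a ≤ (1 - δ r ε) * r

/-- The modulus `δ` is monotone: for each fixed `ε` it is nonincreasing in `r`. -/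
def MonotoneModulus (δ : ℝ → ℝ → ℝ) : Prop :=
  ∀ ε ∈ Set.Ioc (0 : ℝ) 2, ∀ r₁ r₂ : ℝ, 0 < r₁ → r₁ ≤ r₂ → δ r₂ ε ≤ δ r₁ ε


lemma exists_midpoint' {X : Type*} [MetricSpace X] (hX : UniquelyGeodesicSpace X) (x y : X) :
    ∃ m, IsMidpoint x y m := by
  obtain ⟨⟨c, hc0, hcd, hiso⟩, -⟩ := hX x y
  have hd : (0:ℝ) ≤ dist x y := dist_nonneg
  have h2 : dist x y / 2 ∈ Set.Icc (0:ℝ) (dist x y) := ⟨by linarith, by linarith⟩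
  refine ⟨c (dist x y / 2), ⟨c, ⟨hc0, hcd, hiso⟩, _, h2, rfl⟩, ?_, ?_⟩
  · have h := hiso 0 ⟨le_refl 0, hd⟩ _ h2
    rw [hc0] at h
    rw [h, zero_sub, abs_neg, abs_of_nonneg (by linarith)]
  · have h := hiso _ ⟨hd, le_refl _⟩ _ h2
    rw [hcd] at h
    rw [h, abs_of_nonneg (by linarith)]
    ring

theorem prop_UC_of_uniformly_convex {X : Type*} [MetricSpace X]
    (hX : UniquelyGeodesicSpace X) (δ : ℝ → ℝ → ℝ)
    (hδ : UniformlyConvexWith X δ) (hδmono : MonotoneModulus δ)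
    (A B : Set X) (hA : A.Nonempty) (hB : B.Nonempty) (hAconv : GeodesicConvex A) :
    PropUC A B := by
  obtain ⟨hδ1, hδ2⟩ := hδ
  intro x x' y hx hx' hy hxy hx'y
  have hDle : ∀ p ∈ A, ∀ q ∈ B, setDist A B ≤ dist p q := by
    intro p hp q hq
    exact csInf_le ⟨0, by rintro z ⟨a, ha, b, hb, rfl⟩; exact dist_nonneg⟩
      ⟨p, hp, q, hq, rfl⟩
  set D := setDist A B with hDdef
  have hD0 : 0 ≤ D := le_csInf (hA.image2 hB)
    (by rintro z ⟨a, ha, b, hb, rfl⟩; exact dist_nonneg)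
  rcases hD0.eq_or_lt with hD | hD
  · exact squeeze_zero (fun n => dist_nonneg)
      (fun n => dist_triangle_right (x n) (x' n) (y n))
      (by simpa [← hD] using hxy.add hx'y)
  · rw [Metric.tendsto_atTop]
    intro ε hε
    set ε' := min ε D with hε'def
    have hε'pos : 0 < ε' := lt_min hε hD
    set R := D + 1 with hRdef
    have hRpos : 0 < R := by linarith
    have hεR : ε' / R ∈ Set.Ioc (0:ℝ) 2 := by
      refine ⟨div_pos hε'pos hRpos, ?_⟩
      rw [div_le_iff₀ hRpos]
      have := min_le_right ε D
      linarith
    set η := δ R (ε' / R) with hηdef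
    have hηmem : η ∈ Set.Ioc (0:ℝ) 1 := hδ1 R hRpos _ hεR
    set θ := min 1 (η * D / 2) with hθdef
    have hθpos : 0 < θ := lt_min one_pos (by nlinarith [hηmem.1])
    obtain ⟨N1, hN1⟩ := Metric.tendsto_atTop.mp hxy θ hθpos
    obtain ⟨N2, hN2⟩ := Metric.tendsto_atTop.mp hx'y θ hθpos
    refine ⟨max N1 N2, fun n hn => ?_⟩
    have h1 : dist (x n) (y n) ≤ D + θ := by
      have h := hN1 n (le_trans (le_max_left _ _) hn)
      rw [Real.dist_eq] at h
      have := abs_lt.mp h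
      linarith [this.2]
    have h2 : dist (x' n) (y n) ≤ D + θ := by
      have h := hN2 n (le_trans (le_max_right _ _) hn)
      rw [Real.dist_eq] at h
      have := abs_lt.mp h
      linarith [this.2]
    set r := max (dist (x n) (y n)) (dist (x' n) (y n)) with hrdef
    have hrD : D ≤ r := le_trans (hDle _ (hx n) _ (hy n)) (le_max_left _ _)
    have hrpos : 0 < r := lt_of_lt_of_le hD hrD
    have hrθ : r ≤ D + θ := max_le h1 h2
    have hrR : r ≤ R := by
      have hθ1 : θ ≤ 1 := min_le_left _ _
      linarith
    rw [Real.dist_0_eq_abs, abs_of_nonneg dist_nonneg]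
    by_contra hcon
    push_neg at hcon
    have hεle : ε' ≤ dist (x n) (x' n) := (min_le_left ε D).trans hcon
    obtain ⟨m, hm⟩ := exists_midpoint' hX (x n) (x' n)
    have hmA : m ∈ A := hAconv _ (hx n) _ (hx' n) hm.1
    have hkey : ε' / R * r ≤ dist (x n) (x' n) := by
      have h3 : ε' / R * r ≤ ε' / R * R :=
        mul_le_mul_of_nonneg_left hrR (le_of_lt hεR.1)
      rw [div_mul_cancel₀ _ hRpos.ne'] at h3
      linarith
    have hmd : dist m (y n) ≤ (1 - δ r (ε' / R)) * r :=
      hδ2 (y n) (x n) (x' n) m r hrpos _ hεR (le_max_left _ _) (le_max_right _ _) hkey hm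
    have hmono : η ≤ δ r (ε' / R) := hδmono _ hεR r R hrpos hrR
    have hge : D ≤ dist m (y n) := hDle _ hmA _ (hy n)
    have hstep : dist m (y n) ≤ (1 - η) * r := by
      refine hmd.trans ?_
      nlinarith
    have hfin : (1 - η) * r < D := by
      have hθle : θ ≤ η * D / 2 := min_le_right _ _
      have hmul : (1 - η) * r ≤ (1 - η) * (D + θ) :=
        mul_le_mul_of_nonneg_left hrθ (by linarith [hηmem.2])
      nlinarith [mul_pos hηmem.1 hD, mul_nonneg hηmem.1.le hθpos.le]
    linarith
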